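/- arXiv:1809.05952 — 2 statements merged into one kernel-verified Lean document; each statement's English description precedes it below -/
import Mathlib

section
/- The 3-parameters p-star Hamiltonian satisfies the Markov property: for any two pairs of distinct indices {i,j} and {k,l} with {i,j} ∩ {k,l} = ∅, and any two configurations X, Y ∈ Ω_n that agree on all entries except possibly the entries (k,l) and (l,k), the difference of Hamiltonians obtained by switching the edge (i,j) is the same in both: H(X⁺_ij) − H(X⁻_ij) = H(Y⁺_ij) − H(Y⁻_ij), where Z⁺_ij (resp. Z⁻_ij) denotes Z with entries (i,j) and (j,i) set to 1 (resp. 0). -/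
/-- Number of edges `E(X) = ∑_{i<j} X_ij`. -/
def numEdges {n : ℕ} (X : Fin n → Fin n → Bool) : ℕ :=
  ∑ i, ∑ j, if i < j then (X i j).toNat else 0

/-- Number of 2-stars `S2(X) = ∑_k ∑_{i<j, i≠k, j≠k} X_ik X_kj`. -/
def numTwoStars {n : ℕ} (X : Fin n → Fin n → Bool) : ℕ :=
  ∑ k, ∑ i, ∑ j, if i < j ∧ i ≠ k ∧ j ≠ k then (X i k).toNat * (X k j).toNat else 0

/-- Number of triangles `T(X) = ∑_{i<j<k} X_ij X_jk X_ki`. -/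
def numTriangles {n : ℕ} (X : Fin n → Fin n → Bool) : ℕ :=
  ∑ i, ∑ j, ∑ k, if i < j ∧ j < k then (X i j).toNat * ((X j k).toNat * (X k i).toNat) else 0

/-- The 3-parameters p-star Hamiltonian `H(X) = θ E(X) + σ S2(X) − α T(X)`. -/
def hamiltonian {n : ℕ} (θ σ α : ℝ) (X : Fin n → Fin n → Bool) : ℝ :=
  θ * numEdges X + σ * numTwoStars X - α * numTriangles X

/-- `setEdge X i j b` is the configuration equal to `X` except that the symmetric
entries `(i,j)` and `(j,i)` are set to `b`. -/
def setEdge {n : ℕ} (X : Fin n → Fin n → Bool) (i j : Fin n) (b : Bool) :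
    Fin n → Fin n → Bool :=
  fun a c => if (a = i ∧ c = j) ∨ (a = j ∧ c = i) then b else X a c

lemma sum2_sub {n : ℕ} (f g f' g' : Fin n → Fin n → ℤ)
    (h : ∀ a b, f a b - g a b = f' a b - g' a b) :
    ((∑ a, ∑ b, f a b) - ∑ a, ∑ b, g a b) = (∑ a, ∑ b, f' a b) - ∑ a, ∑ b, g' a b := by
  have key : ∀ (F G : Fin n → Fin n → ℤ), ((∑ a, ∑ b, F a b) - ∑ a, ∑ b, G a b)
      = ∑ a, ∑ b, (F a b - G a b) := by
    intro F G
    rw [← Finset.sum_sub_distrib]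
    exact Finset.sum_congr rfl fun a _ => (Finset.sum_sub_distrib ..).symm
  rw [key, key]
  exact Finset.sum_congr rfl fun a _ => Finset.sum_congr rfl fun b _ => h a b

lemma sum3_sub {n : ℕ} (f g f' g' : Fin n → Fin n → Fin n → ℤ)
    (h : ∀ a b c, f a b c - g a b c = f' a b c - g' a b c) :
    ((∑ a, ∑ b, ∑ c, f a b c) - ∑ a, ∑ b, ∑ c, g a b c)
      = (∑ a, ∑ b, ∑ c, f' a b c) - ∑ a, ∑ b, ∑ c, g' a b c := by
  have key : ∀ (F G : Fin n → Fin n → Fin n → ℤ),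
      ((∑ a, ∑ b, ∑ c, F a b c) - ∑ a, ∑ b, ∑ c, G a b c)
        = ∑ a, ∑ b, ∑ c, (F a b c - G a b c) := by
    intro F G
    rw [← Finset.sum_sub_distrib]
    refine Finset.sum_congr rfl fun a _ => ?_
    rw [← Finset.sum_sub_distrib]
    exact Finset.sum_congr rfl fun b _ => (Finset.sum_sub_distrib ..).symm
  rw [key, key]
  exact Finset.sum_congr rfl fun a _ => Finset.sum_congr rfl fun b _ =>
    Finset.sum_congr rfl fun c _ => h a b c

/-- The 3-parameters p-star Hamiltonian satisfies the Markov property: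
for disjoint pairs `{i,j}` and `{k,l}` and configurations `X, Y` agreeing everywhere
except possibly at entries `(k,l)` and `(l,k)`, the difference of Hamiltonians obtained
by switching the edge `(i,j)` is the same in both configurations. -/
theorem stmt_9 {n : ℕ} (hn : 4 ≤ n) (θ σ α : ℝ) (i j k l : Fin n)
    (hij : i ≠ j) (hkl : k ≠ l)
    (hik : i ≠ k) (hil : i ≠ l) (hjk : j ≠ k) (hjl : j ≠ l)
    (X Y : Fin n → Fin n → Bool)
    (hXsymm : ∀ a b, X a b = X b a) (hXdiag : ∀ a, X a a = false)
    (hYsymm : ∀ a b, Y a b = Y b a) (hYdiag : ∀ a, Y a a = false)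
    (hagree : ∀ a b, ¬((a = k ∧ b = l) ∨ (a = l ∧ b = k)) → X a b = Y a b) :
    hamiltonian θ σ α (setEdge X i j true) - hamiltonian θ σ α (setEdge X i j false)
      = hamiltonian θ σ α (setEdge Y i j true) - hamiltonian θ σ α (setEdge Y i j false) := by
  have hji : j ≠ i := hij.symm
  have hXi : ∀ b, X i b = Y i b := fun b =>
    hagree i b (by rintro (⟨h, -⟩ | ⟨h, -⟩); exacts [hik h, hil h])
  have hXj : ∀ b, X j b = Y j b := fun b =>
    hagree j b (by rintro (⟨h, -⟩ | ⟨h, -⟩); exacts [hjk h, hjl h])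
  have hXbi : ∀ a, X a i = Y a i := fun a =>
    hagree a i (by rintro (⟨-, h⟩ | ⟨-, h⟩); exacts [hil h, hik h])
  have hXbj : ∀ a, X a j = Y a j := fun a =>
    hagree a j (by rintro (⟨-, h⟩ | ⟨-, h⟩); exacts [hjl h, hjk h])
  have hE : ((numEdges (setEdge X i j true) : ℤ) - numEdges (setEdge X i j false))
      = (numEdges (setEdge Y i j true) : ℤ) - numEdges (setEdge Y i j false) := by
    unfold numEdges
    push_cast
    refine sum2_sub _ _ _ _ fun a b => ?_
    by_cases hs : (a = i ∧ b = j) ∨ (a = j ∧ b = i) <;> simp [setEdge, hs]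
  have hS : ((numTwoStars (setEdge X i j true) : ℤ) - numTwoStars (setEdge X i j false))
      = (numTwoStars (setEdge Y i j true) : ℤ) - numTwoStars (setEdge Y i j false) := by
    unfold numTwoStars
    push_cast
    refine sum3_sub _ _ _ _ fun m a b => ?_
    by_cases h1 : (a = i ∧ m = j) ∨ (a = j ∧ m = i)
    · rcases h1 with ⟨rfl, rfl⟩ | ⟨rfl, rfl⟩
      · by_cases h2 : b = a
        · subst h2; simp
        · simp [setEdge, hji, h2, hXj]
      · by_cases h2 : b = a
        · subst h2; simp
        · simp [setEdge, hij, h2, hXi]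
    · by_cases h2 : (m = i ∧ b = j) ∨ (m = j ∧ b = i)
      · rcases h2 with ⟨rfl, rfl⟩ | ⟨rfl, rfl⟩
        · simp [setEdge, h1, hij, hXbi]
        · simp [setEdge, h1, hji, hXbj]
      · simp [setEdge, h1, h2]
  have hT : ((numTriangles (setEdge X i j true) : ℤ) - numTriangles (setEdge X i j false))
      = (numTriangles (setEdge Y i j true) : ℤ) - numTriangles (setEdge Y i j false) := by
    unfold numTriangles
    push_cast
    refine sum3_sub _ _ _ _ fun a b c => ?_
    by_cases h1 : (a = i ∧ b = j) ∨ (a = j ∧ b = i)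
    · rcases h1 with ⟨rfl, rfl⟩ | ⟨rfl, rfl⟩
      · by_cases hc1 : c = a
        · subst hc1
          simp [show ∀ x y : Fin n, ¬(x < y ∧ y < x) from
            fun x y h => absurd (h.1.trans h.2) (lt_irrefl x)]
        · by_cases hc2 : c = b
          · subst hc2; simp
          · simp [setEdge, hji, hij, hc1, hc2, hXj, hXbi]
      · by_cases hc1 : c = a
        · subst hc1
          simp [show ∀ x y : Fin n, ¬(x < y ∧ y < x) from
            fun x y h => absurd (h.1.trans h.2) (lt_irrefl x)]
        · by_cases hc2 : c = b
          · subst hc2; simp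
          · simp [setEdge, hij, hji, hc1, hc2, hXi, hXbj]
    · by_cases h2 : (b = i ∧ c = j) ∨ (b = j ∧ c = i)
      · rcases h2 with ⟨rfl, rfl⟩ | ⟨rfl, rfl⟩
        · by_cases ha : a = b
          · subst ha; simp
          · simp [setEdge, h1, ha, hji, hXbi, hXj]
        · by_cases ha : a = b
          · subst ha; simp
          · simp [setEdge, h1, ha, hij, hXbj, hXi]
      · by_cases h3 : (c = i ∧ a = j) ∨ (c = j ∧ a = i)
        · rcases h3 with ⟨rfl, rfl⟩ | ⟨rfl, rfl⟩
          · simp [setEdge, h1, h2, hXj, hXbi]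
          · simp [setEdge, h1, h2, hXi, hXbj]
        · simp [setEdge, h1, h2, h3]
  have hE' := congrArg (fun z : ℤ => (z : ℝ)) hE
  have hS' := congrArg (fun z : ℤ => (z : ℝ)) hS
  have hT' := congrArg (fun z : ℤ => (z : ℝ)) hT
  push_cast at hE' hS' hT'
  unfold hamiltonian
  linear_combination θ * hE' + σ * hS' - α * hT'
end

section
/- Under the 3-parameters p-star model, for any distinct indices i ≠ j, the expectation of the edge indicator satisfies the exact identity E_P[X_ij] = E_P[ 1 / ( exp( θ + σ ∑_{l≠i,j} X_il + σ ∑_{l≠i,j} X_jl − α ∑_{l≠i,j} X_il X_jl ) + 1 ) ], where both expectations are taken with respect to the probability mass function P on Ω_n. -/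
/-- `Ω_n`: the finite set of symmetric zero-one configurations with zero diagonal
(simple graphs on `n` labeled vertices). -/
def graphConfigs (n : ℕ) : Finset (Fin n → Fin n → Bool) :=
  Finset.univ.filter (fun X => (∀ a b, X a b = X b a) ∧ ∀ a, X a a = false)

def Er {n : ℕ} (X : Fin n → Fin n → Bool) : ℝ := ∑ a, ∑ b, ((X a b).toNat : ℝ)
def S2r {n : ℕ} (X : Fin n → Fin n → Bool) : ℝ :=
  ∑ k, ∑ a, ∑ b, if a ≠ b ∧ a ≠ k ∧ b ≠ k then ((X a k).toNat : ℝ) * (X k b).toNat else 0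
def Tr {n : ℕ} (X : Fin n → Fin n → Bool) : ℝ :=
  ∑ a, ∑ b, ∑ c, if a ≠ b ∧ b ≠ c ∧ a ≠ c then ((X a b).toNat : ℝ) * (((X b c).toNat : ℝ) * (X c a).toNat) else 0

lemma Er_eq {n : ℕ} (X : Fin n → Fin n → Bool) (hsym : ∀ a b, X a b = X b a)
    (hdiag : ∀ a, X a a = false) : Er X = 2 * (numEdges X : ℝ) := by
  have key : ∀ a b : Fin n, ((X a b).toNat : ℝ)
      = (if a < b then ((X a b).toNat : ℝ) else 0)
        + (if b < a then ((X a b).toNat : ℝ) else 0) := by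
    intro a b
    rcases lt_trichotomy a b with h | h | h
    · simp [h, not_lt_of_gt h]
    · subst h; simp [hdiag]
    · simp [h, not_lt_of_gt h]
  have cast : (numEdges X : ℝ) = ∑ a, ∑ b, (if a < b then ((X a b).toNat : ℝ) else 0) := by
    simp [numEdges]
  have step : Er X = (∑ a, ∑ b, (if a < b then ((X a b).toNat : ℝ) else 0))
      + ∑ a, ∑ b, (if b < a then ((X a b).toNat : ℝ) else 0) := by
    rw [Er, ← Finset.sum_add_distrib]
    refine Finset.sum_congr rfl fun a _ => ?_
    rw [← Finset.sum_add_distrib]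
    exact Finset.sum_congr rfl fun b _ => key a b
  rw [step, cast]
  have : ∑ a, ∑ b, (if b < a then ((X a b).toNat : ℝ) else 0)
      = ∑ a, ∑ b, (if a < b then ((X a b).toNat : ℝ) else 0) := by
    rw [Finset.sum_comm]
    exact Finset.sum_congr rfl fun a _ => Finset.sum_congr rfl fun b _ => by rw [hsym]
  rw [this]; ring

lemma S2r_eq {n : ℕ} (X : Fin n → Fin n → Bool) (hsym : ∀ a b, X a b = X b a) :
    S2r X = 2 * (numTwoStars X : ℝ) := by
  have cast : (numTwoStars X : ℝ)
      = ∑ k, ∑ a, ∑ b, (if a < b ∧ a ≠ k ∧ b ≠ k then ((X a k).toNat : ℝ) * (X k b).toNat else 0) := by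
    simp [numTwoStars]
  have key : ∀ k a b : Fin n,
      (if a ≠ b ∧ a ≠ k ∧ b ≠ k then ((X a k).toNat : ℝ) * (X k b).toNat else 0)
      = (if a < b ∧ a ≠ k ∧ b ≠ k then ((X a k).toNat : ℝ) * (X k b).toNat else 0)
        + (if b < a ∧ b ≠ k ∧ a ≠ k then ((X a k).toNat : ℝ) * (X k b).toNat else 0) := by
    intro k a b
    rcases lt_trichotomy a b with h | h | h
    · simp [h, ne_of_lt h, not_lt_of_gt h, and_comm]
    · subst h; simp
    · simp [h, (ne_of_lt h).symm, not_lt_of_gt h, and_comm]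
  have step : S2r X
      = (∑ k, ∑ a, ∑ b, (if a < b ∧ a ≠ k ∧ b ≠ k then ((X a k).toNat : ℝ) * (X k b).toNat else 0))
        + ∑ k, ∑ a, ∑ b, (if b < a ∧ b ≠ k ∧ a ≠ k then ((X a k).toNat : ℝ) * (X k b).toNat else 0) := by
    rw [S2r, ← Finset.sum_add_distrib]
    refine Finset.sum_congr rfl fun k _ => ?_
    rw [← Finset.sum_add_distrib]
    refine Finset.sum_congr rfl fun a _ => ?_
    rw [← Finset.sum_add_distrib]
    exact Finset.sum_congr rfl fun b _ => key k a b
  have flip : ∑ k, ∑ a, ∑ b, (if b < a ∧ b ≠ k ∧ a ≠ k then ((X a k).toNat : ℝ) * (X k b).toNat else 0)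
      = ∑ k, ∑ a, ∑ b, (if a < b ∧ a ≠ k ∧ b ≠ k then ((X a k).toNat : ℝ) * (X k b).toNat else 0) := by
    refine Finset.sum_congr rfl fun k _ => ?_
    rw [Finset.sum_comm]
    refine Finset.sum_congr rfl fun a _ => Finset.sum_congr rfl fun b _ => ?_
    by_cases h : a < b ∧ a ≠ k ∧ b ≠ k
    · rw [if_pos h, if_pos h, hsym a k, hsym k b, mul_comm]
    · rw [if_neg h, if_neg h]
  rw [step, flip, cast]; ring

lemma split6 {n : ℕ} (a b c : Fin n) (t : ℝ) :
    (if a ≠ b ∧ b ≠ c ∧ a ≠ c then t else 0)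
    = (if a < b ∧ b < c then t else 0) + (if a < c ∧ c < b then t else 0)
      + (if b < a ∧ a < c then t else 0) + (if b < c ∧ c < a then t else 0)
      + (if c < a ∧ a < b then t else 0) + (if c < b ∧ b < a then t else 0) := by
  simp only [Fin.lt_def, ne_eq, ← Fin.val_eq_val]
  split_ifs <;> first | ring1 | (exfalso; omega)

lemma sum3_swap_outer {n : ℕ} (f : Fin n → Fin n → Fin n → ℝ) :
    ∑ a, ∑ b, ∑ c, f a b c = ∑ b, ∑ a, ∑ c, f a b c := Finset.sum_comm

lemma sum3_swap_inner {n : ℕ} (f : Fin n → Fin n → Fin n → ℝ) :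
    ∑ a, ∑ b, ∑ c, f a b c = ∑ a, ∑ c, ∑ b, f a b c :=
  Finset.sum_congr rfl fun _ _ => Finset.sum_comm

lemma sum3_perm_cab {n : ℕ} (f : Fin n → Fin n → Fin n → ℝ) :
    ∑ a, ∑ b, ∑ c, f a b c = ∑ b, ∑ c, ∑ a, f a b c := by
  rw [sum3_swap_outer]; exact Finset.sum_congr rfl fun _ _ => Finset.sum_comm

lemma sum3_perm_bca {n : ℕ} (f : Fin n → Fin n → Fin n → ℝ) :
    ∑ a, ∑ b, ∑ c, f a b c = ∑ c, ∑ a, ∑ b, f a b c := by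
  rw [sum3_swap_inner, sum3_swap_outer]

lemma sum3_rev {n : ℕ} (f : Fin n → Fin n → Fin n → ℝ) :
    ∑ a, ∑ b, ∑ c, f a b c = ∑ c, ∑ b, ∑ a, f a b c := by
  rw [sum3_swap_inner (f := f), sum3_perm_cab (f := fun a c b => f a b c)]

def tT {n : ℕ} (X : Fin n → Fin n → Bool) (a b c : Fin n) : ℝ :=
  ((X a b).toNat : ℝ) * (((X b c).toNat : ℝ) * ((X c a).toNat : ℝ))

lemma Tr_eq {n : ℕ} (X : Fin n → Fin n → Bool) (hsym : ∀ a b, X a b = X b a) :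
    Tr X = 6 * (numTriangles X : ℝ) := by
  have cast : (numTriangles X : ℝ)
      = ∑ a, ∑ b, ∑ c, (if a < b ∧ b < c then tT X a b c else 0) := by
    simp [numTriangles, tT]
  have step : Tr X
      = (∑ a, ∑ b, ∑ c, (if a < b ∧ b < c then tT X a b c else 0))
        + (∑ a, ∑ b, ∑ c, (if a < c ∧ c < b then tT X a b c else 0))
        + (∑ a, ∑ b, ∑ c, (if b < a ∧ a < c then tT X a b c else 0))
        + (∑ a, ∑ b, ∑ c, (if b < c ∧ c < a then tT X a b c else 0))
        + (∑ a, ∑ b, ∑ c, (if c < a ∧ a < b then tT X a b c else 0))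
        + (∑ a, ∑ b, ∑ c, (if c < b ∧ b < a then tT X a b c else 0)) := by
    rw [Tr]
    simp only [← Finset.sum_add_distrib]
    refine Finset.sum_congr rfl fun a _ => Finset.sum_congr rfl fun b _ =>
      Finset.sum_congr rfl fun c _ => ?_
    exact split6 a b c (tT X a b c)
  have h2 : (∑ a, ∑ b, ∑ c, (if a < c ∧ c < b then tT X a b c else 0))
      = ∑ a, ∑ b, ∑ c, (if a < b ∧ b < c then tT X a c b else 0) :=
    sum3_swap_inner (fun a b c => if a < c ∧ c < b then tT X a b c else 0)
  have h3 : (∑ a, ∑ b, ∑ c, (if b < a ∧ a < c then tT X a b c else 0))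
      = ∑ a, ∑ b, ∑ c, (if a < b ∧ b < c then tT X b a c else 0) :=
    sum3_swap_outer (fun a b c => if b < a ∧ a < c then tT X a b c else 0)
  have h4 : (∑ a, ∑ b, ∑ c, (if b < c ∧ c < a then tT X a b c else 0))
      = ∑ a, ∑ b, ∑ c, (if a < b ∧ b < c then tT X c a b else 0) :=
    sum3_perm_cab (fun a b c => if b < c ∧ c < a then tT X a b c else 0)
  have h5 : (∑ a, ∑ b, ∑ c, (if c < a ∧ a < b then tT X a b c else 0))
      = ∑ a, ∑ b, ∑ c, (if a < b ∧ b < c then tT X b c a else 0) :=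
    sum3_perm_bca (fun a b c => if c < a ∧ a < b then tT X a b c else 0)
  have h6 : (∑ a, ∑ b, ∑ c, (if c < b ∧ b < a then tT X a b c else 0))
      = ∑ a, ∑ b, ∑ c, (if a < b ∧ b < c then tT X c b a else 0) :=
    sum3_rev (fun a b c => if c < b ∧ b < a then tT X a b c else 0)
  have hperm : ∀ (f : Fin n → Fin n → Fin n → ℝ),
      (∀ a b c, f a b c = tT X a b c) →
      (∑ a, ∑ b, ∑ c, (if a < b ∧ b < c then f a b c else 0))
        = ∑ a, ∑ b, ∑ c, (if a < b ∧ b < c then tT X a b c else 0) := by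
    intro f hf
    exact Finset.sum_congr rfl fun a _ => Finset.sum_congr rfl fun b _ =>
      Finset.sum_congr rfl fun c _ => by rw [hf]
  have e2 : ∀ a b c : Fin n, tT X a c b = tT X a b c := by
    intro a b c; unfold tT; rw [hsym a c, hsym c b, hsym b a]; ring
  have e3 : ∀ a b c : Fin n, tT X b a c = tT X a b c := by
    intro a b c; unfold tT; rw [hsym b a, hsym a c, hsym c b]; ring
  have e4 : ∀ a b c : Fin n, tT X c a b = tT X a b c := by
    intro a b c; unfold tT; ring
  have e5 : ∀ a b c : Fin n, tT X b c a = tT X a b c := by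
    intro a b c; unfold tT; ring
  have e6 : ∀ a b c : Fin n, tT X c b a = tT X a b c := by
    intro a b c; unfold tT; rw [hsym c b, hsym b a, hsym a c]; ring
  rw [step, h2, h3, h4, h5, h6,
    hperm _ e2, hperm _ e3, hperm _ e4, hperm _ e5, hperm _ e6, cast]
  ring

lemma pair_collapse {n : ℕ} (i j : Fin n) (hij : i ≠ j) (g : Fin n → Fin n → ℝ) :
    ∑ a, ∑ b, (if (a = i ∧ b = j) ∨ (a = j ∧ b = i) then g a b else 0) = g i j + g j i := by
  have h : ∀ a b : Fin n, (if (a = i ∧ b = j) ∨ (a = j ∧ b = i) then g a b else 0)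
      = (if a = i ∧ b = j then g a b else 0) + (if a = j ∧ b = i then g a b else 0) := by
    intro a b
    by_cases h1 : a = i ∧ b = j <;> by_cases h2 : a = j ∧ b = i
    · exact absurd (h1.1.symm.trans h2.1) hij
    · simp [h1, h2]; intro h; exact absurd h hij
    · simp [h1, h2]; intro h; exact absurd h hij.symm
    · simp [h1, h2]
  simp only [h, Finset.sum_add_distrib]
  congr 1 <;> simp [ite_and, Finset.sum_ite_eq]

def upd {n : ℕ} (i j : Fin n) (X : Fin n → Fin n → Bool) : Fin n → Fin n → Bool :=
  fun a b => if (a = i ∧ b = j) ∨ (a = j ∧ b = i) then true else X a b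

lemma sum_if_const {n : ℕ} {P : Prop} [Decidable P] (g : Fin n → ℝ) :
    ∑ a, (if P then g a else 0) = if P then ∑ a, g a else 0 := by
  split <;> simp

lemma triple_collapse_12 {n : ℕ} (i j : Fin n) (hij : i ≠ j) (g : Fin n → Fin n → Fin n → ℝ) :
    ∑ x, ∑ y, ∑ b, (if (x = i ∧ y = j) ∨ (x = j ∧ y = i) then g x y b else 0)
      = (∑ b, g i j b) + ∑ b, g j i b := by
  have h : ∀ x y : Fin n, ∑ b, (if (x = i ∧ y = j) ∨ (x = j ∧ y = i) then g x y b else 0)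
      = if (x = i ∧ y = j) ∨ (x = j ∧ y = i) then (∑ b, g x y b) else 0 :=
    fun x y => sum_if_const _
  simp only [h]
  exact pair_collapse i j hij (fun x y => ∑ b, g x y b)

lemma triple_collapse_13 {n : ℕ} (i j : Fin n) (hij : i ≠ j) (g : Fin n → Fin n → Fin n → ℝ) :
    ∑ x, ∑ a, ∑ y, (if (x = i ∧ y = j) ∨ (x = j ∧ y = i) then g x a y else 0)
      = (∑ a, g i a j) + ∑ a, g j a i := by
  have h : ∀ x : Fin n, ∑ a, ∑ y, (if (x = i ∧ y = j) ∨ (x = j ∧ y = i) then g x a y else 0)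
      = ∑ y, ∑ a, (if (x = i ∧ y = j) ∨ (x = j ∧ y = i) then g x a y else 0) :=
    fun x => Finset.sum_comm
  simp only [h]
  exact triple_collapse_12 i j hij (fun x y a => g x a y)

lemma triple_collapse_23 {n : ℕ} (i j : Fin n) (hij : i ≠ j) (g : Fin n → Fin n → Fin n → ℝ) :
    ∑ a, ∑ x, ∑ y, (if (x = i ∧ y = j) ∨ (x = j ∧ y = i) then g a x y else 0)
      = (∑ a, g a i j) + ∑ a, g a j i := by
  rw [← Finset.sum_add_distrib]
  exact Finset.sum_congr rfl fun a _ => pair_collapse i j hij (fun x y => g a x y)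

lemma upd_toNat {n : ℕ} (i j : Fin n) (X : Fin n → Fin n → Bool)
    (hsym : ∀ a b, X a b = X b a) (h0 : X i j = false) (a b : Fin n) :
    ((upd i j X a b).toNat : ℝ)
      = ((X a b).toNat : ℝ) + (if (a = i ∧ b = j) ∨ (a = j ∧ b = i) then 1 else 0) := by
  unfold upd
  by_cases h : (a = i ∧ b = j) ∨ (a = j ∧ b = i)
  · have hf : X a b = false := by
      rcases h with ⟨ha, hb⟩ | ⟨ha, hb⟩
      · rw [ha, hb, h0]
      · rw [ha, hb, hsym j i, h0]
    simp [h, hf]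
  · simp [h]

lemma Er_upd {n : ℕ} (i j : Fin n) (hij : i ≠ j) (X : Fin n → Fin n → Bool)
    (hsym : ∀ a b, X a b = X b a) (h0 : X i j = false) :
    Er (upd i j X) = Er X + 2 := by
  have step : Er (upd i j X)
      = Er X + ∑ a, ∑ b, (if (a = i ∧ b = j) ∨ (a = j ∧ b = i) then (1:ℝ) else 0) := by
    rw [Er, Er, ← Finset.sum_add_distrib]
    refine Finset.sum_congr rfl fun a _ => ?_
    rw [← Finset.sum_add_distrib]
    exact Finset.sum_congr rfl fun b _ => upd_toNat i j X hsym h0 a b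
  rw [step, pair_collapse i j hij (fun _ _ => (1:ℝ))]
  norm_num

def rS {n : ℕ} (X : Fin n → Fin n → Bool) (r i j : Fin n) : ℝ :=
  ∑ l, if l ≠ i ∧ l ≠ j then ((X r l).toNat : ℝ) else 0

def cS {n : ℕ} (X : Fin n → Fin n → Bool) (i j : Fin n) : ℝ :=
  ∑ l, if l ≠ i ∧ l ≠ j then ((X i l).toNat : ℝ) * ((X j l).toNat : ℝ) else 0

lemma sum_if_congr {n : ℕ} {g h : Fin n → ℝ} {p q : Fin n → Prop}
    [DecidablePred p] [DecidablePred q]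
    (hpq : ∀ l, p l ↔ q l) (hgh : ∀ l, q l → g l = h l) :
    ∑ l, (if p l then g l else 0) = ∑ l, (if q l then h l else 0) :=
  Finset.sum_congr rfl fun l _ => by
    by_cases hq : q l
    · rw [if_pos ((hpq l).mpr hq), if_pos hq, hgh l hq]
    · rw [if_neg (fun hp => hq ((hpq l).mp hp)), if_neg hq]

lemma S2r_upd {n : ℕ} (i j : Fin n) (hij : i ≠ j) (X : Fin n → Fin n → Bool)
    (hsym : ∀ a b, X a b = X b a) (h0 : X i j = false) :
    S2r (upd i j X) = S2r X + 2 * (rS X i i j + rS X j i j) := by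
  have key : ∀ k a b : Fin n,
      (if a ≠ b ∧ a ≠ k ∧ b ≠ k then ((upd i j X a k).toNat : ℝ) * ((upd i j X k b).toNat : ℝ) else 0)
      = (if a ≠ b ∧ a ≠ k ∧ b ≠ k then ((X a k).toNat : ℝ) * ((X k b).toNat : ℝ) else 0)
        + (if (k = i ∧ b = j) ∨ (k = j ∧ b = i) then
            (if a ≠ b ∧ a ≠ k ∧ b ≠ k then ((X a k).toNat : ℝ) else 0) else 0)
        + (if (a = i ∧ k = j) ∨ (a = j ∧ k = i) then
            (if a ≠ b ∧ a ≠ k ∧ b ≠ k then ((X k b).toNat : ℝ) else 0) else 0) := by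
    intro k a b
    rw [upd_toNat i j X hsym h0 a k, upd_toNat i j X hsym h0 k b]
    by_cases hC : a ≠ b ∧ a ≠ k ∧ b ≠ k
    · by_cases hp : (a = i ∧ k = j) ∨ (a = j ∧ k = i)
      · by_cases hq : (k = i ∧ b = j) ∨ (k = j ∧ b = i)
        · exfalso
          rcases hp with ⟨ha, hk⟩ | ⟨ha, hk⟩ <;> rcases hq with ⟨hk', hb⟩ | ⟨hk', hb⟩
          · exact hij (hk'.symm.trans hk)
          · exact hC.1 (ha.trans hb.symm)
          · exact hC.1 (ha.trans hb.symm)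
          · exact hij (hk.symm.trans hk')
        · simp only [if_pos hC, if_pos hp, if_neg hq]; ring
      · by_cases hq : (k = i ∧ b = j) ∨ (k = j ∧ b = i)
        · simp only [if_pos hC, if_neg hp, if_pos hq]; ring
        · simp only [if_pos hC, if_neg hp, if_neg hq]; ring
    · simp only [if_neg hC]
      by_cases hp : (a = i ∧ k = j) ∨ (a = j ∧ k = i) <;>
        by_cases hq : (k = i ∧ b = j) ∨ (k = j ∧ b = i) <;>
        simp [hp, hq]
  have step : S2r (upd i j X)
      = S2r X
        + (∑ k, ∑ a, ∑ b, (if (k = i ∧ b = j) ∨ (k = j ∧ b = i) then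
            (if a ≠ b ∧ a ≠ k ∧ b ≠ k then ((X a k).toNat : ℝ) else 0) else 0))
        + ∑ k, ∑ a, ∑ b, (if (a = i ∧ k = j) ∨ (a = j ∧ k = i) then
            (if a ≠ b ∧ a ≠ k ∧ b ≠ k then ((X k b).toNat : ℝ) else 0) else 0) := by
    rw [S2r, S2r]
    simp only [← Finset.sum_add_distrib]
    exact Finset.sum_congr rfl fun k _ => Finset.sum_congr rfl fun a _ =>
      Finset.sum_congr rfl fun b _ => key k a b
  have hA : (∑ k, ∑ a, ∑ b, (if (k = i ∧ b = j) ∨ (k = j ∧ b = i) then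
        (if a ≠ b ∧ a ≠ k ∧ b ≠ k then ((X a k).toNat : ℝ) else 0) else 0))
      = rS X i i j + rS X j i j := by
    rw [triple_collapse_13 i j hij
      (fun x a y => if a ≠ y ∧ a ≠ x ∧ y ≠ x then ((X a x).toNat : ℝ) else 0)]
    congr 1
    · exact sum_if_congr (q := fun l => l ≠ i ∧ l ≠ j)
        (fun l => ⟨fun h => ⟨h.2.1, h.1⟩, fun h => ⟨h.2, h.1, Ne.symm hij⟩⟩)
        (fun l _ => by rw [hsym l i])
    · exact sum_if_congr (q := fun l => l ≠ i ∧ l ≠ j)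
        (fun l => ⟨fun h => ⟨h.1, h.2.1⟩, fun h => ⟨h.1, h.2, hij⟩⟩)
        (fun l _ => by rw [hsym l j])
  have hB : (∑ k, ∑ a, ∑ b, (if (a = i ∧ k = j) ∨ (a = j ∧ k = i) then
        (if a ≠ b ∧ a ≠ k ∧ b ≠ k then ((X k b).toNat : ℝ) else 0) else 0))
      = rS X i i j + rS X j i j := by
    have hcond : ∀ k a b : Fin n,
        (if (a = i ∧ k = j) ∨ (a = j ∧ k = i) then
          (if a ≠ b ∧ a ≠ k ∧ b ≠ k then ((X k b).toNat : ℝ) else 0) else 0)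
        = (if (k = i ∧ a = j) ∨ (k = j ∧ a = i) then
          (if a ≠ b ∧ a ≠ k ∧ b ≠ k then ((X k b).toNat : ℝ) else 0) else 0) := by
      intro k a b
      exact if_congr (by tauto) rfl rfl
    rw [Finset.sum_congr rfl fun k _ => Finset.sum_congr rfl fun a _ =>
      Finset.sum_congr rfl fun b _ => hcond k a b]
    rw [triple_collapse_12 i j hij
      (fun x y b => if y ≠ b ∧ y ≠ x ∧ b ≠ x then ((X x b).toNat : ℝ) else 0)]
    congr 1
    · exact sum_if_congr (q := fun l => l ≠ i ∧ l ≠ j)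
        (fun l => ⟨fun h => ⟨h.2.2, Ne.symm h.1⟩, fun h => ⟨Ne.symm h.2, hij.symm, h.1⟩⟩)
        (fun l _ => rfl)
    · exact sum_if_congr (q := fun l => l ≠ i ∧ l ≠ j)
        (fun l => ⟨fun h => ⟨Ne.symm h.1, h.2.2⟩, fun h => ⟨Ne.symm h.1, hij, h.2⟩⟩)
        (fun l _ => rfl)
  rw [step, hA, hB]; ring

lemma Tr_upd {n : ℕ} (i j : Fin n) (hij : i ≠ j) (X : Fin n → Fin n → Bool)
    (hsym : ∀ a b, X a b = X b a) (h0 : X i j = false) :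
    Tr (upd i j X) = Tr X + 6 * cS X i j := by
  have key : ∀ a b c : Fin n,
      (if a ≠ b ∧ b ≠ c ∧ a ≠ c then
        ((upd i j X a b).toNat : ℝ) * (((upd i j X b c).toNat : ℝ) * ((upd i j X c a).toNat : ℝ)) else 0)
      = (if a ≠ b ∧ b ≠ c ∧ a ≠ c then
          ((X a b).toNat : ℝ) * (((X b c).toNat : ℝ) * ((X c a).toNat : ℝ)) else 0)
        + (if (a = i ∧ b = j) ∨ (a = j ∧ b = i) then
            (if a ≠ b ∧ b ≠ c ∧ a ≠ c then ((X b c).toNat : ℝ) * ((X c a).toNat : ℝ) else 0) else 0)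
        + (if (b = i ∧ c = j) ∨ (b = j ∧ c = i) then
            (if a ≠ b ∧ b ≠ c ∧ a ≠ c then ((X a b).toNat : ℝ) * ((X c a).toNat : ℝ) else 0) else 0)
        + (if (c = i ∧ a = j) ∨ (c = j ∧ a = i) then
            (if a ≠ b ∧ b ≠ c ∧ a ≠ c then ((X a b).toNat : ℝ) * ((X b c).toNat : ℝ) else 0) else 0) := by
    intro a b c
    have K1 : ¬((a ≠ b ∧ b ≠ c ∧ a ≠ c) ∧ ((a = i ∧ b = j) ∨ (a = j ∧ b = i))
        ∧ ((b = i ∧ c = j) ∨ (b = j ∧ c = i))) := by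
      rintro ⟨⟨hab, hbc, hac⟩, hp, hq⟩
      rcases hp with ⟨ha, hb⟩ | ⟨ha, hb⟩ <;> rcases hq with ⟨hb', hc⟩ | ⟨hb', hc⟩
      · exact hij (hb'.symm.trans hb)
      · exact hac (ha.trans hc.symm)
      · exact hac (ha.trans hc.symm)
      · exact hij (hb.symm.trans hb')
    have K2 : ¬((a ≠ b ∧ b ≠ c ∧ a ≠ c) ∧ ((a = i ∧ b = j) ∨ (a = j ∧ b = i))
        ∧ ((c = i ∧ a = j) ∨ (c = j ∧ a = i))) := by
      rintro ⟨⟨hab, hbc, hac⟩, hp, hq⟩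
      rcases hp with ⟨ha, hb⟩ | ⟨ha, hb⟩ <;> rcases hq with ⟨hc, ha'⟩ | ⟨hc, ha'⟩
      · exact hij (ha.symm.trans ha')
      · exact hbc (hb.trans hc.symm)
      · exact hbc (hb.trans hc.symm)
      · exact hij (ha'.symm.trans ha)
    have K3 : ¬((a ≠ b ∧ b ≠ c ∧ a ≠ c) ∧ ((b = i ∧ c = j) ∨ (b = j ∧ c = i))
        ∧ ((c = i ∧ a = j) ∨ (c = j ∧ a = i))) := by
      rintro ⟨⟨hab, hbc, hac⟩, hq, hr⟩
      rcases hq with ⟨hb, hc⟩ | ⟨hb, hc⟩ <;> rcases hr with ⟨hc', ha⟩ | ⟨hc', ha⟩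
      · exact hij (hc'.symm.trans hc)
      · exact hab (ha.trans hb.symm)
      · exact hab (ha.trans hb.symm)
      · exact hij (hc.symm.trans hc')
    rw [upd_toNat i j X hsym h0 a b, upd_toNat i j X hsym h0 b c, upd_toNat i j X hsym h0 c a]
    by_cases hC : a ≠ b ∧ b ≠ c ∧ a ≠ c
    · by_cases hp : (a = i ∧ b = j) ∨ (a = j ∧ b = i)
      · by_cases hq : (b = i ∧ c = j) ∨ (b = j ∧ c = i)
        · exact absurd ⟨hC, hp, hq⟩ K1
        · by_cases hr : (c = i ∧ a = j) ∨ (c = j ∧ a = i)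
          · exact absurd ⟨hC, hp, hr⟩ K2
          · simp only [if_pos hC, if_pos hp, if_neg hq, if_neg hr]; ring
      · by_cases hq : (b = i ∧ c = j) ∨ (b = j ∧ c = i)
        · by_cases hr : (c = i ∧ a = j) ∨ (c = j ∧ a = i)
          · exact absurd ⟨hC, hq, hr⟩ K3
          · simp only [if_pos hC, if_neg hp, if_pos hq, if_neg hr]; ring
        · by_cases hr : (c = i ∧ a = j) ∨ (c = j ∧ a = i)
          · simp only [if_pos hC, if_neg hp, if_neg hq, if_pos hr]; ring
          · simp only [if_pos hC, if_neg hp, if_neg hq, if_neg hr]; ring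
    · by_cases hp : (a = i ∧ b = j) ∨ (a = j ∧ b = i) <;>
        by_cases hq : (b = i ∧ c = j) ∨ (b = j ∧ c = i) <;>
        by_cases hr : (c = i ∧ a = j) ∨ (c = j ∧ a = i) <;>
        simp [hC, hp, hq, hr]
  have step : Tr (upd i j X)
      = Tr X
        + (∑ a, ∑ b, ∑ c, (if (a = i ∧ b = j) ∨ (a = j ∧ b = i) then
            (if a ≠ b ∧ b ≠ c ∧ a ≠ c then ((X b c).toNat : ℝ) * ((X c a).toNat : ℝ) else 0) else 0))
        + (∑ a, ∑ b, ∑ c, (if (b = i ∧ c = j) ∨ (b = j ∧ c = i) then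
            (if a ≠ b ∧ b ≠ c ∧ a ≠ c then ((X a b).toNat : ℝ) * ((X c a).toNat : ℝ) else 0) else 0))
        + ∑ a, ∑ b, ∑ c, (if (c = i ∧ a = j) ∨ (c = j ∧ a = i) then
            (if a ≠ b ∧ b ≠ c ∧ a ≠ c then ((X a b).toNat : ℝ) * ((X b c).toNat : ℝ) else 0) else 0) := by
    rw [Tr, Tr]
    simp only [← Finset.sum_add_distrib]
    exact Finset.sum_congr rfl fun a _ => Finset.sum_congr rfl fun b _ =>
      Finset.sum_congr rfl fun c _ => key a b c
  have hS1 : (∑ a, ∑ b, ∑ c, (if (a = i ∧ b = j) ∨ (a = j ∧ b = i) then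
        (if a ≠ b ∧ b ≠ c ∧ a ≠ c then ((X b c).toNat : ℝ) * ((X c a).toNat : ℝ) else 0) else 0))
      = 2 * cS X i j := by
    rw [triple_collapse_12 i j hij
      (fun x y c => if x ≠ y ∧ y ≠ c ∧ x ≠ c then ((X y c).toNat : ℝ) * ((X c x).toNat : ℝ) else 0)]
    have h1 : (∑ c, if i ≠ j ∧ j ≠ c ∧ i ≠ c then ((X j c).toNat : ℝ) * ((X c i).toNat : ℝ) else 0)
        = cS X i j :=
      sum_if_congr (q := fun l => l ≠ i ∧ l ≠ j)
        (fun l => ⟨fun h => ⟨Ne.symm h.2.2, Ne.symm h.2.1⟩, fun h => ⟨hij, Ne.symm h.2, Ne.symm h.1⟩⟩)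
        (fun l _ => by rw [hsym l i]; ring)
    have h2 : (∑ c, if j ≠ i ∧ i ≠ c ∧ j ≠ c then ((X i c).toNat : ℝ) * ((X c j).toNat : ℝ) else 0)
        = cS X i j :=
      sum_if_congr (q := fun l => l ≠ i ∧ l ≠ j)
        (fun l => ⟨fun h => ⟨Ne.symm h.2.1, Ne.symm h.2.2⟩, fun h => ⟨hij.symm, Ne.symm h.1, Ne.symm h.2⟩⟩)
        (fun l _ => by rw [hsym l j])
    rw [h1, h2]; ring
  have hS2 : (∑ a, ∑ b, ∑ c, (if (b = i ∧ c = j) ∨ (b = j ∧ c = i) then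
        (if a ≠ b ∧ b ≠ c ∧ a ≠ c then ((X a b).toNat : ℝ) * ((X c a).toNat : ℝ) else 0) else 0))
      = 2 * cS X i j := by
    rw [triple_collapse_23 i j hij
      (fun a x y => if a ≠ x ∧ x ≠ y ∧ a ≠ y then ((X a x).toNat : ℝ) * ((X y a).toNat : ℝ) else 0)]
    have h1 : (∑ a, if a ≠ i ∧ i ≠ j ∧ a ≠ j then ((X a i).toNat : ℝ) * ((X j a).toNat : ℝ) else 0)
        = cS X i j :=
      sum_if_congr (q := fun l => l ≠ i ∧ l ≠ j)
        (fun l => ⟨fun h => ⟨h.1, h.2.2⟩, fun h => ⟨h.1, hij, h.2⟩⟩)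
        (fun l _ => by rw [hsym l i])
    have h2 : (∑ a, if a ≠ j ∧ j ≠ i ∧ a ≠ i then ((X a j).toNat : ℝ) * ((X i a).toNat : ℝ) else 0)
        = cS X i j :=
      sum_if_congr (q := fun l => l ≠ i ∧ l ≠ j)
        (fun l => ⟨fun h => ⟨h.2.2, h.1⟩, fun h => ⟨h.2, hij.symm, h.1⟩⟩)
        (fun l _ => by rw [hsym l j, hsym i l]; ring)
    rw [h1, h2]; ring
  have hS3 : (∑ a, ∑ b, ∑ c, (if (c = i ∧ a = j) ∨ (c = j ∧ a = i) then
        (if a ≠ b ∧ b ≠ c ∧ a ≠ c then ((X a b).toNat : ℝ) * ((X b c).toNat : ℝ) else 0) else 0))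
      = 2 * cS X i j := by
    have hcond : ∀ a b c : Fin n,
        (if (c = i ∧ a = j) ∨ (c = j ∧ a = i) then
          (if a ≠ b ∧ b ≠ c ∧ a ≠ c then ((X a b).toNat : ℝ) * ((X b c).toNat : ℝ) else 0) else 0)
        = (if (a = i ∧ c = j) ∨ (a = j ∧ c = i) then
          (if a ≠ b ∧ b ≠ c ∧ a ≠ c then ((X a b).toNat : ℝ) * ((X b c).toNat : ℝ) else 0) else 0) :=
      fun a b c => if_congr (by tauto) rfl rfl
    rw [Finset.sum_congr rfl fun a _ => Finset.sum_congr rfl fun b _ =>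
      Finset.sum_congr rfl fun c _ => hcond a b c]
    rw [triple_collapse_13 i j hij
      (fun x b y => if x ≠ b ∧ b ≠ y ∧ x ≠ y then ((X x b).toNat : ℝ) * ((X b y).toNat : ℝ) else 0)]
    have h1 : (∑ b, if i ≠ b ∧ b ≠ j ∧ i ≠ j then ((X i b).toNat : ℝ) * ((X b j).toNat : ℝ) else 0)
        = cS X i j :=
      sum_if_congr (q := fun l => l ≠ i ∧ l ≠ j)
        (fun l => ⟨fun h => ⟨Ne.symm h.1, h.2.1⟩, fun h => ⟨Ne.symm h.1, h.2, hij⟩⟩)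
        (fun l _ => by rw [hsym l j])
    have h2 : (∑ b, if j ≠ b ∧ b ≠ i ∧ j ≠ i then ((X j b).toNat : ℝ) * ((X b i).toNat : ℝ) else 0)
        = cS X i j :=
      sum_if_congr (q := fun l => l ≠ i ∧ l ≠ j)
        (fun l => ⟨fun h => ⟨h.2.1, Ne.symm h.1⟩, fun h => ⟨Ne.symm h.2, h.1, hij.symm⟩⟩)
        (fun l _ => by rw [hsym l i]; ring)
    rw [h1, h2]; ring
  rw [step, hS1, hS2, hS3]; ring



def dnd {n : ℕ} (i j : Fin n) (X : Fin n → Fin n → Bool) : Fin n → Fin n → Bool :=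
  fun a b => if (a = i ∧ b = j) ∨ (a = j ∧ b = i) then false else X a b

section Main
variable {n : ℕ} (i j : Fin n)

lemma not_pair_diag (hij : i ≠ j) (a : Fin n) : ¬((a = i ∧ a = j) ∨ (a = j ∧ a = i)) := by
  rintro (⟨h1, h2⟩ | ⟨h1, h2⟩)
  · exact hij (h1.symm.trans h2)
  · exact hij (h2.symm.trans h1)

lemma upd_mem (hij : i ≠ j) (X : Fin n → Fin n → Bool) (hX : X ∈ graphConfigs n) :
    upd i j X ∈ graphConfigs n := by
  simp only [graphConfigs, Finset.mem_filter, Finset.mem_univ, true_and] at hX ⊢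
  obtain ⟨hsym, hdiag⟩ := hX
  refine ⟨fun a b => ?_, fun a => ?_⟩
  · unfold upd
    by_cases h : (a = i ∧ b = j) ∨ (a = j ∧ b = i)
    · rw [if_pos h, if_pos (by tauto)]
    · rw [if_neg h, if_neg (by tauto), hsym]
  · unfold upd
    rw [if_neg (not_pair_diag i j hij a), hdiag]

lemma dnd_mem (hij : i ≠ j) (X : Fin n → Fin n → Bool) (hX : X ∈ graphConfigs n) :
    dnd i j X ∈ graphConfigs n := by
  simp only [graphConfigs, Finset.mem_filter, Finset.mem_univ, true_and] at hX ⊢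
  obtain ⟨hsym, hdiag⟩ := hX
  refine ⟨fun a b => ?_, fun a => ?_⟩
  · unfold dnd
    by_cases h : (a = i ∧ b = j) ∨ (a = j ∧ b = i)
    · rw [if_pos h, if_pos (by tauto)]
    · rw [if_neg h, if_neg (by tauto), hsym]
  · unfold dnd
    rw [if_neg (not_pair_diag i j hij a), hdiag]

lemma dnd_upd (X : Fin n → Fin n → Bool) (hsym : ∀ a b, X a b = X b a)
    (h0 : X i j = false) : dnd i j (upd i j X) = X := by
  funext a b
  unfold dnd upd
  by_cases h : (a = i ∧ b = j) ∨ (a = j ∧ b = i)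
  · rw [if_pos h]
    rcases h with ⟨ha, hb⟩ | ⟨ha, hb⟩
    · rw [ha, hb, h0]
    · rw [ha, hb, hsym j i, h0]
  · rw [if_neg h, if_neg h]

lemma upd_dnd (X : Fin n → Fin n → Bool) (hsym : ∀ a b, X a b = X b a)
    (h1 : X i j = true) : upd i j (dnd i j X) = X := by
  funext a b
  unfold upd dnd
  by_cases h : (a = i ∧ b = j) ∨ (a = j ∧ b = i)
  · rw [if_pos h]
    rcases h with ⟨ha, hb⟩ | ⟨ha, hb⟩
    · rw [ha, hb, h1]
    · rw [ha, hb, hsym j i, h1]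
  · rw [if_neg h, if_neg h]

lemma upd_ij (X : Fin n → Fin n → Bool) : upd i j X i j = true := by
  unfold upd; rw [if_pos (Or.inl ⟨rfl, rfl⟩)]

lemma dnd_ij (X : Fin n → Fin n → Bool) : dnd i j X i j = false := by
  unfold dnd; rw [if_pos (Or.inl ⟨rfl, rfl⟩)]

lemma upd_row_i (hij : i ≠ j) (X : Fin n → Fin n → Bool) (l : Fin n) (hl : l ≠ j) :
    upd i j X i l = X i l := by
  unfold upd
  rw [if_neg]
  rintro (⟨h1, h2⟩ | ⟨h1, h2⟩)
  · exact hl h2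
  · exact hij h1

lemma upd_row_j (hij : i ≠ j) (X : Fin n → Fin n → Bool) (l : Fin n) (hl : l ≠ i) :
    upd i j X j l = X j l := by
  unfold upd
  rw [if_neg]
  rintro (⟨h1, h2⟩ | ⟨h1, h2⟩)
  · exact hij h1.symm
  · exact hl h2

lemma rS_upd_i (hij : i ≠ j) (X : Fin n → Fin n → Bool) :
    rS (upd i j X) i i j = rS X i i j := by
  unfold rS
  refine Finset.sum_congr rfl fun l _ => ?_
  by_cases h : l ≠ i ∧ l ≠ j
  · rw [if_pos h, if_pos h, upd_row_i i j hij X l h.2]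
  · rw [if_neg h, if_neg h]

lemma rS_upd_j (hij : i ≠ j) (X : Fin n → Fin n → Bool) :
    rS (upd i j X) j i j = rS X j i j := by
  unfold rS
  refine Finset.sum_congr rfl fun l _ => ?_
  by_cases h : l ≠ i ∧ l ≠ j
  · rw [if_pos h, if_pos h, upd_row_j i j hij X l h.1]
  · rw [if_neg h, if_neg h]

lemma cS_upd (hij : i ≠ j) (X : Fin n → Fin n → Bool) :
    cS (upd i j X) i j = cS X i j := by
  unfold cS
  refine Finset.sum_congr rfl fun l _ => ?_
  by_cases h : l ≠ i ∧ l ≠ j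
  · rw [if_pos h, if_pos h, upd_row_i i j hij X l h.2, upd_row_j i j hij X l h.1]
  · rw [if_neg h, if_neg h]

lemma ham_upd (θ σ α : ℝ) (hij : i ≠ j) (X : Fin n → Fin n → Bool)
    (hsym : ∀ a b, X a b = X b a) (hdiag : ∀ a, X a a = false) (h0 : X i j = false) :
    hamiltonian θ σ α (upd i j X)
      = hamiltonian θ σ α X + (θ + σ * rS X i i j + σ * rS X j i j - α * cS X i j) := by
  have husym : ∀ a b, upd i j X a b = upd i j X b a := by
    intro a b
    unfold upd
    by_cases h : (a = i ∧ b = j) ∨ (a = j ∧ b = i)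
    · rw [if_pos h, if_pos (by tauto)]
    · rw [if_neg h, if_neg (by tauto), hsym]
  have hudiag : ∀ a, upd i j X a a = false := by
    intro a; unfold upd; rw [if_neg (not_pair_diag i j hij a), hdiag]
  have hE : (numEdges (upd i j X) : ℝ) = (numEdges X : ℝ) + 1 := by
    have h1 := Er_eq (upd i j X) husym hudiag
    have h2 := Er_eq X hsym hdiag
    have h3 := Er_upd i j hij X hsym h0
    nlinarith [h1, h2, h3]
  have hS : (numTwoStars (upd i j X) : ℝ)
      = (numTwoStars X : ℝ) + (rS X i i j + rS X j i j) := by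
    have h1 := S2r_eq (upd i j X) husym
    have h2 := S2r_eq X hsym
    have h3 := S2r_upd i j hij X hsym h0
    nlinarith [h1, h2, h3]
  have hT : (numTriangles (upd i j X) : ℝ) = (numTriangles X : ℝ) + cS X i j := by
    have h1 := Tr_eq (upd i j X) husym
    have h2 := Tr_eq X hsym
    have h3 := Tr_upd i j hij X hsym h0
    nlinarith [h1, h2, h3]
  unfold hamiltonian
  rw [hE, hS, hT]
  ring

end Main

set_option maxHeartbeats 1000000 in
/-- Under the 3-parameters p-star model, for `i ≠ j`, the expectation of
the edge indicator satisfies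
`E_P[X_ij] = E_P[1/(exp(θ + σ∑_{l≠i,j}X_il + σ∑_{l≠i,j}X_jl − α∑_{l≠i,j}X_il X_jl) + 1)]`. -/
theorem stmt_14 {n : ℕ} (hn : 3 ≤ n) (θ σ α : ℝ)
    (P : (Fin n → Fin n → Bool) → ℝ)
    (hP : ∀ X, P X = Real.exp (-(hamiltonian θ σ α X))
      / ∑ Y ∈ graphConfigs n, Real.exp (-(hamiltonian θ σ α Y)))
    (i j : Fin n) (hij : i ≠ j) :
    ∑ X ∈ graphConfigs n, P X * ((X i j).toNat : ℝ)
      = ∑ X ∈ graphConfigs n, P X *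
          (1 / (Real.exp (θ
              + σ * (∑ l, if l ≠ i ∧ l ≠ j then ((X i l).toNat : ℝ) else 0)
              + σ * (∑ l, if l ≠ i ∧ l ≠ j then ((X j l).toNat : ℝ) else 0)
              - α * (∑ l, if l ≠ i ∧ l ≠ j then ((X i l).toNat : ℝ) * ((X j l).toNat : ℝ) else 0))
            + 1)) := by
  classical
  have hZ : 0 < ∑ Y ∈ graphConfigs n, Real.exp (-(hamiltonian θ σ α Y)) := by
    refine Finset.sum_pos (fun Y _ => Real.exp_pos _) ⟨fun _ _ => false, ?_⟩
    simp [graphConfigs]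
  set Z := ∑ Y ∈ graphConfigs n, Real.exp (-(hamiltonian θ σ α Y)) with hZdef
  show ∑ X ∈ graphConfigs n, P X * ((X i j).toNat : ℝ)
      = ∑ X ∈ graphConfigs n, P X *
          (1 / (Real.exp (θ + σ * rS X i i j + σ * rS X j i j - α * cS X i j) + 1))
  set F : (Fin n → Fin n → Bool) → ℝ := fun X =>
    1 / (Real.exp (θ + σ * rS X i i j + σ * rS X j i j - α * cS X i j) + 1) with hF
  set A := (graphConfigs n).filter (fun X => X i j = false) with hA
  set B := (graphConfigs n).filter (fun X => X i j = true) with hB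
  have hsplit : ∀ f : (Fin n → Fin n → Bool) → ℝ,
      ∑ X ∈ graphConfigs n, f X = ∑ X ∈ B, f X + ∑ X ∈ A, f X := by
    intro f
    rw [← Finset.sum_filter_add_sum_filter_not (graphConfigs n) (fun X => X i j = true) f]
    congr 1
    refine Finset.sum_congr ?_ (fun _ _ => rfl)
    exact Finset.filter_congr fun X _ => by simp [Bool.not_eq_true]
  have memA : ∀ X ∈ A, (∀ a b, X a b = X b a) ∧ (∀ a, X a a = false) ∧ X i j = false := by
    intro X hX
    rw [hA, Finset.mem_filter] at hX
    have h1 := hX.1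
    simp only [graphConfigs, Finset.mem_filter, Finset.mem_univ, true_and] at h1
    exact ⟨h1.1, h1.2, hX.2⟩
  have memB : ∀ X ∈ B, (∀ a b, X a b = X b a) ∧ (∀ a, X a a = false) ∧ X i j = true := by
    intro X hX
    rw [hB, Finset.mem_filter] at hX
    have h1 := hX.1
    simp only [graphConfigs, Finset.mem_filter, Finset.mem_univ, true_and] at h1
    exact ⟨h1.1, h1.2, hX.2⟩
  have memAΩ : ∀ X ∈ A, X ∈ graphConfigs n := fun X hX => (Finset.mem_filter.mp hX).1
  have memBΩ : ∀ X ∈ B, X ∈ graphConfigs n := fun X hX => (Finset.mem_filter.mp hX).1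
  have hB2A : ∀ g : (Fin n → Fin n → Bool) → ℝ,
      ∑ X ∈ B, g X = ∑ X ∈ A, g (upd i j X) := by
    intro g
    refine Finset.sum_nbij' (dnd i j) (upd i j) ?_ ?_ ?_ ?_ ?_
    · intro X hX
      rw [hA, Finset.mem_filter]
      exact ⟨dnd_mem i j hij X (memBΩ X hX), dnd_ij i j X⟩
    · intro X hX
      rw [hB, Finset.mem_filter]
      exact ⟨upd_mem i j hij X (memAΩ X hX), upd_ij i j X⟩
    · intro X hX
      obtain ⟨hs, _, h1⟩ := memB X hX
      exact upd_dnd i j X hs h1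
    · intro X hX
      obtain ⟨hs, _, h0⟩ := memA X hX
      exact dnd_upd i j X hs h0
    · intro X hX
      obtain ⟨hs, _, h1⟩ := memB X hX
      rw [upd_dnd i j X hs h1]
  have hL : ∑ X ∈ graphConfigs n, P X * ((X i j).toNat : ℝ) = ∑ X ∈ A, P (upd i j X) := by
    rw [hsplit]
    have h1 : ∑ X ∈ B, P X * ((X i j).toNat : ℝ) = ∑ X ∈ B, P X := by
      refine Finset.sum_congr rfl fun X hX => ?_
      rw [(memB X hX).2.2]; norm_num
    have h2 : ∑ X ∈ A, P X * ((X i j).toNat : ℝ) = 0 := by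
      refine Finset.sum_eq_zero fun X hX => ?_
      rw [(memA X hX).2.2]; norm_num
    rw [h1, h2, add_zero, hB2A P]
  have hFupd : ∀ X ∈ A, F (upd i j X) = F X := by
    intro X hX
    rw [hF]
    simp only
    rw [rS_upd_i i j hij X, rS_upd_j i j hij X, cS_upd i j hij X]
  have hR : ∑ X ∈ graphConfigs n, P X * F X
      = ∑ X ∈ A, (P (upd i j X) * F X + P X * F X) := by
    rw [hsplit, hB2A (fun X => P X * F X), ← Finset.sum_add_distrib]
    refine Finset.sum_congr rfl fun X hX => ?_
    rw [hFupd X hX]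
  rw [hL, hR]
  refine Finset.sum_congr rfl fun X hX => ?_
  obtain ⟨hs, hd, h0⟩ := memA X hX
  rw [hP, hP, ham_upd i j θ σ α hij X hs hd h0]
  set H := hamiltonian θ σ α X
  set D := θ + σ * rS X i i j + σ * rS X j i j - α * cS X i j with hD
  have hFX : F X = 1 / (Real.exp D + 1) := rfl
  rw [hFX]
  have he : Real.exp (-(H + D)) * Real.exp D = Real.exp (-H) := by
    rw [← Real.exp_add]; congr 1; ring
  have hE1 : Real.exp D + 1 ≠ 0 := by positivity
  have hZ' : Z ≠ 0 := ne_of_gt hZ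
  have he' : Real.exp (-D - H) * Real.exp D = Real.exp (-H) := by
    rw [← Real.exp_add]; congr 1; ring
  field_simp
  linear_combination he
end
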